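/- Digon case (with τ₀ = 0.32): (i) I(circPerim0(2.29), 2, −2τ₀, 1) > 0, i.e., √(4π·2.29 − 2.29²) + 0.64·B' + 3·p₅' − p₅ > 0; and (ii) for all ρ ∈ [0.1, 1], I(circPerim0(ρπ/3), 2, ρπ/3, ρ) > 0, i.e., √(4π·(ρπ/3) − (ρπ/3)²) − (ρπ/3)·B' + 3·p₅' − ρ·p₅ > 0. -/

import Mathlib

open Real

/-- Perimeter of a regular spherical `n`-gon of area `x` on the unit sphere. -/
noncomputable def regPerim (x n : ℝ) : ℝ :=
  n * Real.arccos ((Real.cos (2 * π / n) +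
      (Real.cos ((π - (2 * π - x) / n) / 2)) ^ 2) /
      (Real.sin ((π - (2 * π - x) / n) / 2)) ^ 2)

/-- Circumference of a circle on the unit sphere enclosing area `a`. -/
noncomputable def circPerim0 (a : ℝ) : ℝ := Real.sqrt (4 * π * a - a ^ 2)

/-- Perimeter of the regular spherical pentagon of area `π/3`. -/
noncomputable def p5 : ℝ := 5 * Real.arccos ((4 * Real.cos (2 * π / 5) + 1) / 3)

/-- Derivative at `n = 5` of `n ↦ regPerim (π/3) n`. -/
noncomputable def p5' : ℝ := deriv (fun n : ℝ => regPerim (π / 3) n) 5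

/-- `B' = -∂₁ regPerim (π/3, 5)`. -/
noncomputable def B' : ℝ := - deriv (fun x : ℝ => regPerim x 5) (π / 3)

/-- The isoperimetric functional `I(ℓ, n, t, ρ)`. -/
noncomputable def Ifun (ℓ n t ρ : ℝ) : ℝ := ℓ - t * B' + (5 - n) * p5' - ρ * p5

lemma my_cos_two_pi_div_five : Real.cos (2 * π / 5) = (Real.sqrt 5 - 1) / 4 := by
  have h : (2 * π / 5 : ℝ) = 2 * (π / 5) := by ring
  have h5 : Real.sqrt 5 ^ 2 = 5 := Real.sq_sqrt (by norm_num)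
  rw [h, Real.cos_two_mul, Real.cos_pi_div_five]
  ring_nf
  nlinarith [h5]

lemma my_sqrt5_lt_three : Real.sqrt 5 < 3 := by
  have : Real.sqrt 5 < Real.sqrt 9 := Real.sqrt_lt_sqrt (by norm_num) (by norm_num)
  simpa [show (9:ℝ) = 3^2 by norm_num, Real.sqrt_sq] using this

lemma my_value_lemma : ((Real.cos (2 * π / 5) + Real.cos (π/3) ^ 2) / Real.sin (π/3) ^ 2)
    = Real.sqrt 5 / 3 := by
  rw [my_cos_two_pi_div_five, Real.cos_pi_div_three, Real.sin_pi_div_three]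
  have h3 : Real.sqrt 3 ^ 2 = 3 := Real.sq_sqrt (by norm_num)
  field_simp
  rw [h3]; ring

lemma my_ne1 : (Real.sqrt 5 / 3 : ℝ) ≠ -1 := by
  have := Real.sqrt_nonneg 5; intro h; nlinarith

lemma my_ne2 : (Real.sqrt 5 / 3 : ℝ) ≠ 1 := by
  have := my_sqrt5_lt_three; intro h; nlinarith

lemma my_derivB : deriv (fun x : ℝ => regPerim x 5) (π / 3)
    = (3 * Real.sqrt 3 + Real.sqrt 15) / 6 := by
  have h5 : Real.sqrt 5 ^ 2 = 5 := Real.sq_sqrt (by norm_num)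
  have h3 : Real.sqrt 3 ^ 2 = 3 := Real.sq_sqrt (by norm_num)
  have h35 : Real.sqrt 3 * Real.sqrt 5 = Real.sqrt 15 := by
    rw [← Real.sqrt_mul (by norm_num)]; norm_num
  have hu : HasDerivAt (fun x : ℝ => (π - (2 * π - x) / 5) / 2) (1/10) (π/3) := by
    have h1 : HasDerivAt (fun x : ℝ => x) 1 (π/3) := hasDerivAt_id _
    have h2 := (((h1.const_sub (2*π)).div_const 5).const_sub π).div_const 2
    rw [show (1/10:ℝ) = -(-1/5)/2 by norm_num]; exact h2
  have huval : (π - (2 * π - π/3) / 5) / 2 = π/3 := by ring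
  have hcosu : HasDerivAt (fun x : ℝ => Real.cos ((π - (2 * π - x) / 5) / 2))
      (-Real.sin (π/3) * (1/10)) (π/3) := by
    have := hu.cos; rwa [huval] at this
  have hsinu : HasDerivAt (fun x : ℝ => Real.sin ((π - (2 * π - x) / 5) / 2))
      (Real.cos (π/3) * (1/10)) (π/3) := by
    have := hu.sin; rwa [huval] at this
  have hN : HasDerivAt (fun x : ℝ => Real.cos (2*π/5) + Real.cos ((π - (2 * π - x) / 5) / 2) ^ 2)
      ((2 * Real.cos ((π - (2 * π - π/3) / 5) / 2) ^ 1) * (-Real.sin (π/3) * (1/10))) (π/3) :=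
    (hcosu.pow 2).const_add _
  have hD : HasDerivAt (fun x : ℝ => Real.sin ((π - (2 * π - x) / 5) / 2) ^ 2)
      ((2 * Real.sin ((π - (2 * π - π/3) / 5) / 2) ^ 1) * (Real.cos (π/3) * (1/10))) (π/3) :=
    hsinu.pow 2
  have hD0 : Real.sin ((π - (2 * π - π/3) / 5) / 2) ^ 2 ≠ 0 := by
    rw [huval, Real.sin_pi_div_three]; positivity
  have hq := hN.div hD hD0
  have hgval : (Real.cos (2*π/5) + Real.cos ((π - (2 * π - π/3) / 5) / 2) ^ 2) /
      Real.sin ((π - (2 * π - π/3) / 5) / 2) ^ 2 = Real.sqrt 5 / 3 := by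
    rw [huval]; exact my_value_lemma
  have harccos := Real.hasDerivAt_arccos my_ne1 my_ne2
  rw [← hgval] at harccos
  have hcomp := harccos.comp (π/3) hq
  have hfull := hcomp.const_mul (5:ℝ)
  have hfn : (fun x : ℝ => regPerim x 5) = fun x : ℝ =>
      5 * Real.arccos ((Real.cos (2*π/5) + Real.cos ((π - (2 * π - x) / 5) / 2) ^ 2) /
        Real.sin ((π - (2 * π - x) / 5) / 2) ^ 2) := by
    funext x; simp [regPerim]
  rw [hfn]
  simp only [Function.comp_def, Pi.div_def, Pi.mul_def] at hfull
  rw [hfull.deriv]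
  rw [hgval, huval, Real.cos_pi_div_three, Real.sin_pi_div_three]
  have hsq : 1 - (Real.sqrt 5 / 3) ^ 2 = (2/3)^2 := by
    rw [div_pow, h5]; norm_num
  rw [hsq, Real.sqrt_sq (by norm_num)]
  rw [my_cos_two_pi_div_five]
  field_simp
  ring_nf
  have h315 : Real.sqrt 3 * Real.sqrt 15 = 3 * Real.sqrt 5 := by
    rw [← h35, ← mul_assoc, ← sq, h3]
  rw [show Real.sqrt 3 ^ 3 = 3 * Real.sqrt 3 by rw [pow_succ, h3],
    show Real.sqrt 3 ^ 4 = 9 by rw [show Real.sqrt 3 ^ 4 = (Real.sqrt 3 ^ 2) ^ 2 by ring, h3]; norm_num, h3]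
  nlinarith [h3, h5, h35, Real.sqrt_nonneg 3, Real.sqrt_nonneg 5, h315]

lemma my_B'_eq : B' = -((3 * Real.sqrt 3 + Real.sqrt 15) / 6) := by
  rw [B', my_derivB]

lemma my_p5_eq : p5 = 5 * Real.arccos (Real.sqrt 5 / 3) := by
  rw [p5, my_cos_two_pi_div_five]
  norm_num
  congr 1
  ring

lemma my_derivP : deriv (fun n : ℝ => regPerim (π/3) n) 5 =
    Real.arccos (Real.sqrt 5 / 3) - 4 * π / 5 * Real.sin (2 * π / 5)
      + π * (3 * Real.sqrt 3 + Real.sqrt 15) / 18 := by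
  have h5 : Real.sqrt 5 ^ 2 = 5 := Real.sq_sqrt (by norm_num)
  have h3 : Real.sqrt 3 ^ 2 = 3 := Real.sq_sqrt (by norm_num)
  have h35 : Real.sqrt 3 * Real.sqrt 5 = Real.sqrt 15 := by
    rw [← Real.sqrt_mul (by norm_num)]; norm_num
  have h50 : (5:ℝ) ≠ 0 := by norm_num
  have hid : HasDerivAt (fun n : ℝ => n) 1 (5:ℝ) := hasDerivAt_id _
  -- derivative of n ↦ 2π/n
  have hc : HasDerivAt (fun n : ℝ => 2 * π / n) ((0 * 5 - 2 * π * 1)/5^2) (5:ℝ) :=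
    (hasDerivAt_const (5:ℝ) (2*π)).div hid h50
  have hcc : HasDerivAt (fun n : ℝ => Real.cos (2 * π / n))
      (-Real.sin (2 * π / 5) * ((0 * 5 - 2 * π * 1)/5^2)) (5:ℝ) := hc.cos
  -- derivative of v n
  have hv : HasDerivAt (fun n : ℝ => (π - (2 * π - π/3) / n) / 2)
      ((-((0 * 5 - (2 * π - π/3) * 1)/5^2)) / 2) (5:ℝ) :=
    (((hasDerivAt_const (5:ℝ) (2*π - π/3)).div hid h50).const_sub π).div_const 2
  have hvval : (π - (2 * π - π/3) / 5) / 2 = π/3 := by ring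
  have hcosv : HasDerivAt (fun n : ℝ => Real.cos ((π - (2 * π - π/3) / n) / 2))
      (-Real.sin (π/3) * ((-((0 * 5 - (2 * π - π/3) * 1)/5^2)) / 2)) (5:ℝ) := by
    have := hv.cos; rwa [hvval] at this
  have hsinv : HasDerivAt (fun n : ℝ => Real.sin ((π - (2 * π - π/3) / n) / 2))
      (Real.cos (π/3) * ((-((0 * 5 - (2 * π - π/3) * 1)/5^2)) / 2)) (5:ℝ) := by
    have := hv.sin; rwa [hvval] at this
  have hN : HasDerivAt
      (fun n : ℝ => Real.cos (2 * π / n) + Real.cos ((π - (2 * π - π/3) / n) / 2) ^ 2)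
      (-Real.sin (2 * π / 5) * ((0 * 5 - 2 * π * 1)/5^2) +
        (2 * Real.cos ((π - (2 * π - π/3) / 5) / 2) ^ 1) *
          (-Real.sin (π/3) * ((-((0 * 5 - (2 * π - π/3) * 1)/5^2)) / 2))) (5:ℝ) :=
    hcc.add (hcosv.pow 2)
  have hD : HasDerivAt (fun n : ℝ => Real.sin ((π - (2 * π - π/3) / n) / 2) ^ 2)
      ((2 * Real.sin ((π - (2 * π - π/3) / 5) / 2) ^ 1) *
        (Real.cos (π/3) * ((-((0 * 5 - (2 * π - π/3) * 1)/5^2)) / 2))) (5:ℝ) :=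
    hsinv.pow 2
  have hD0 : Real.sin ((π - (2 * π - π/3) / 5) / 2) ^ 2 ≠ 0 := by
    rw [hvval, Real.sin_pi_div_three]; positivity
  have hq := hN.div hD hD0
  have hgval : (Real.cos (2 * π / 5) + Real.cos ((π - (2 * π - π/3) / 5) / 2) ^ 2) /
      Real.sin ((π - (2 * π - π/3) / 5) / 2) ^ 2 = Real.sqrt 5 / 3 := by
    rw [hvval]; exact my_value_lemma
  have harccos := Real.hasDerivAt_arccos my_ne1 my_ne2
  rw [← hgval] at harccos
  have hA := harccos.comp (5:ℝ) hq
  have hfull := hid.mul hA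
  simp only [Function.comp_def, Pi.div_def, Pi.mul_def] at hfull
  have hfn : (fun n : ℝ => regPerim (π/3) n) = fun n : ℝ =>
      n * Real.arccos ((Real.cos (2 * π / n) + Real.cos ((π - (2 * π - π/3) / n) / 2) ^ 2) /
        Real.sin ((π - (2 * π - π/3) / n) / 2) ^ 2) := by
    funext n; simp [regPerim]
  rw [hfn]
  rw [hfull.deriv]
  rw [hgval, hvval, Real.cos_pi_div_three, Real.sin_pi_div_three]
  have hsq : 1 - (Real.sqrt 5 / 3) ^ 2 = (2/3)^2 := by
    rw [div_pow, h5]; norm_num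
  rw [hsq, Real.sqrt_sq (by norm_num)]
  rw [my_cos_two_pi_div_five]
  field_simp
  ring_nf
  have h315 : Real.sqrt 3 * Real.sqrt 15 = 3 * Real.sqrt 5 := by
    rw [← h35, ← mul_assoc, ← sq, h3]
  rw [show Real.sqrt 3 ^ 3 = 3 * Real.sqrt 3 by rw [pow_succ, h3],
    show Real.sqrt 3 ^ 4 = 9 by rw [show Real.sqrt 3 ^ 4 = (Real.sqrt 3 ^ 2) ^ 2 by ring, h3]; norm_num, h3]
  have h315p : Real.sqrt 3 * Real.sqrt 15 * π = 3 * Real.sqrt 5 * π := by rw [h315]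
  nlinarith [h3, h5, h35, Real.sqrt_nonneg 3, Real.sqrt_nonneg 5, Real.pi_pos, h315, h315p,
    Real.sin_nonneg_of_nonneg_of_le_pi (by positivity : (0:ℝ) ≤ 2*π/5)
      (by nlinarith [Real.pi_pos] : 2*π/5 ≤ π)]

lemma my_p5'_eq : p5' = Real.arccos (Real.sqrt 5 / 3) - 4 * π / 5 * Real.sin (2 * π / 5)
    + π * (3 * Real.sqrt 3 + Real.sqrt 15) / 18 := by
  rw [p5', my_derivP]

-- numeric bounds on cos of small rationals
lemma my_cos_init (q lo hi : ℝ) (h0 : 0 ≤ q) (h1 : q ≤ 1)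
    (hlo : lo ≤ 1 - q^2/2 - q^4*(5/96)) (hhi : 1 - q^2/2 + q^4*(5/96) ≤ hi) :
    lo ≤ Real.cos q ∧ Real.cos q ≤ hi := by
  have hb := Real.cos_bound (x := q) (by rwa [abs_of_nonneg h0])
  rw [abs_of_nonneg h0, abs_le] at hb
  exact ⟨by nlinarith [hb.1, hb.2], by nlinarith [hb.1, hb.2]⟩

lemma my_cos_double (x lo hi lo' hi' : ℝ) (h0 : 0 ≤ lo)
    (h : lo ≤ Real.cos x ∧ Real.cos x ≤ hi)
    (hl : lo' ≤ 2*lo^2 - 1) (hh : 2*hi^2 - 1 ≤ hi') :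
    lo' ≤ Real.cos (2*x) ∧ Real.cos (2*x) ≤ hi' := by
  rw [Real.cos_two_mul]
  exact ⟨by nlinarith [h.1, h.2], by nlinarith [h.1, h.2]⟩

lemma my_cos073 : Real.cos 0.73 ≤ 0.745185137 := by
  have c1 : (0.998958953 : ℝ) ≤ Real.cos 0.045625 ∧ Real.cos 0.045625 ≤ 0.998959406 :=
    my_cos_init _ _ _ (by norm_num) (by norm_num) (by norm_num) (by norm_num)
  have c2 := my_cos_double 0.045625 _ _ 0.995837979 0.995839790 (by norm_num) c1
    (by norm_num) (by norm_num)
  have c3 := my_cos_double (2*0.045625) _ _ 0.983386560 0.983393775 (by norm_num) c2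
    (by norm_num) (by norm_num)
  have c4 := my_cos_double (2*(2*0.045625)) _ _ 0.934098252 0.934126634 (by norm_num) c3
    (by norm_num) (by norm_num)
  have c5 := my_cos_double (2*(2*(2*0.045625))) _ _ 0.745079088 0.745185137 (by norm_num) c4
    (by norm_num) (by norm_num)
  have he : (2*(2*(2*(2*(0.045625:ℝ))))) = 0.73 := by norm_num
  rw [he] at c5
  exact c5.2

lemma my_cos072 : (0.751715451 : ℝ) ≤ Real.cos 0.72 := by
  have c1 : (0.998987286 : ℝ) ≤ Real.cos 0.045 ∧ Real.cos 0.045 ≤ 0.998987714 :=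
    my_cos_init _ _ _ (by norm_num) (by norm_num) (by norm_num) (by norm_num)
  have c2 := my_cos_double 0.045 _ _ 0.995951195 0.995952906 (by norm_num) c1
    (by norm_num) (by norm_num)
  have c3 := my_cos_double (2*0.045) _ _ 0.983837565 0.983844382 (by norm_num) c2
    (by norm_num) (by norm_num)
  have c4 := my_cos_double (2*(2*0.045)) _ _ 0.935872708 0.935899536 (by norm_num) c3
    (by norm_num) (by norm_num)
  have c5 := my_cos_double (2*(2*(2*0.045))) _ _ 0.751715451 0.751815883 (by norm_num) c4
    (by norm_num) (by norm_num)
  have he : (2*(2*(2*(2*(0.045:ℝ))))) = 0.72 := by norm_num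
  rw [he] at c5
  exact c5.1

lemma my_sqrt5_lb : (2.2360679 : ℝ) ≤ Real.sqrt 5 := Real.le_sqrt_of_sq_le (by norm_num)
lemma my_sqrt5_ub : Real.sqrt 5 ≤ 2.2360680 := by
  have : Real.sqrt 5 ≤ Real.sqrt (2.2360680^2) := Real.sqrt_le_sqrt (by norm_num)
  rwa [Real.sqrt_sq (by norm_num)] at this
lemma my_sqrt3_lb : (1.7320508 : ℝ) ≤ Real.sqrt 3 := Real.le_sqrt_of_sq_le (by norm_num)
lemma my_sqrt3_ub : Real.sqrt 3 ≤ 1.7320509 := by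
  have : Real.sqrt 3 ≤ Real.sqrt (1.7320509^2) := Real.sqrt_le_sqrt (by norm_num)
  rwa [Real.sqrt_sq (by norm_num)] at this
lemma my_sqrt15_lb : (3.8729833 : ℝ) ≤ Real.sqrt 15 := Real.le_sqrt_of_sq_le (by norm_num)
lemma my_sqrt15_ub : Real.sqrt 15 ≤ 3.8729834 := by
  have : Real.sqrt 15 ≤ Real.sqrt (3.8729834^2) := Real.sqrt_le_sqrt (by norm_num)
  rwa [Real.sqrt_sq (by norm_num)] at this

lemma my_A_ub : Real.arccos (Real.sqrt 5 / 3) ≤ 0.73 := by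
  have h1 : Real.cos 0.73 < Real.sqrt 5 / 3 := by
    have := my_cos073
    nlinarith [my_sqrt5_lb]
  have h2 : Real.arccos (Real.sqrt 5 / 3) < Real.arccos (Real.cos 0.73) := by
    apply Real.strictAntiOn_arccos _ _ h1
    · exact ⟨Real.neg_one_le_cos _, Real.cos_le_one _⟩
    · exact ⟨by nlinarith [Real.sqrt_nonneg 5], by nlinarith [my_sqrt5_lt_three]⟩
  have h3 : Real.arccos (Real.cos 0.73) = 0.73 :=
    Real.arccos_cos (by norm_num) (by nlinarith [Real.pi_gt_d6])
  linarith

lemma my_A_lb : (0.72 : ℝ) ≤ Real.arccos (Real.sqrt 5 / 3) := by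
  have h1 : Real.sqrt 5 / 3 < Real.cos 0.72 := by
    have := my_cos072
    nlinarith [my_sqrt5_ub]
  have h2 : Real.arccos (Real.cos 0.72) < Real.arccos (Real.sqrt 5 / 3) := by
    apply Real.strictAntiOn_arccos _ _ h1
    · exact ⟨by nlinarith [Real.sqrt_nonneg 5], by nlinarith [my_sqrt5_lt_three]⟩
    · exact ⟨Real.neg_one_le_cos _, Real.cos_le_one _⟩
  have h3 : Real.arccos (Real.cos 0.72) = 0.72 :=
    Real.arccos_cos (by norm_num) (by nlinarith [Real.pi_gt_d6])
  linarith

lemma my_sin_ub : Real.sin (2 * π / 5) ≤ 0.9510568 := by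
  have hs0 : 0 ≤ Real.sin (2 * π / 5) :=
    Real.sin_nonneg_of_nonneg_of_le_pi (by positivity) (by nlinarith [Real.pi_pos])
  have hsq : Real.sin (2 * π / 5) ^ 2 = 1 - Real.cos (2 * π / 5) ^ 2 := Real.sin_sq _
  rw [my_cos_two_pi_div_five] at hsq
  have h2 : Real.sin (2 * π / 5) ^ 2 ≤ 0.9045085 := by
    nlinarith [my_sqrt5_ub, Real.sqrt_nonneg 5,
      Real.sq_sqrt (show (0:ℝ) ≤ 5 by norm_num)]
  nlinarith [h2, hs0, sq_nonneg (Real.sin (2 * π / 5) - 0.9510568)]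

lemma my_sin_lb : (0 : ℝ) ≤ Real.sin (2 * π / 5) :=
  Real.sin_nonneg_of_nonneg_of_le_pi (by positivity) (by nlinarith [Real.pi_pos])

lemma my_pis_ub : π * Real.sin (2 * π / 5) ≤ 3.141593 * 0.9510568 :=
  mul_le_mul Real.pi_lt_d6.le my_sin_ub my_sin_lb (by norm_num)

lemma my_s3pi_lb : (1.7320508 : ℝ) * 3.141592 ≤ Real.sqrt 3 * π :=
  mul_le_mul my_sqrt3_lb Real.pi_gt_d6.le (by norm_num) (Real.sqrt_nonneg 3)

lemma my_s15pi_lb : (3.8729833 : ℝ) * 3.141592 ≤ Real.sqrt 15 * π :=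
  mul_le_mul my_sqrt15_lb Real.pi_gt_d6.le (by norm_num) (Real.sqrt_nonneg 15)

theorem case_digon :
    Ifun (circPerim0 2.29) 2 (-(2 * 0.32)) 1 > 0 ∧
    (∀ ρ ∈ Set.Icc (0.1 : ℝ) 1,
        Ifun (circPerim0 (ρ * π / 3)) 2 (ρ * π / 3) ρ > 0) := by
  constructor
  · -- part (i)
    have hl : (4.8510 : ℝ) ≤ Real.sqrt (4 * π * 2.29 - 2.29 ^ 2) :=
      Real.le_sqrt_of_sq_le (by nlinarith [Real.pi_gt_d6])
    rw [Ifun, circPerim0, my_B'_eq, my_p5_eq, my_p5'_eq]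
    nlinarith [hl, my_pis_ub, my_s3pi_lb, my_s15pi_lb, my_A_ub, my_sqrt3_ub, my_sqrt15_ub]
  · -- part (ii)
    intro ρ hmem
    obtain ⟨hr1, hr2⟩ := hmem
    have hr0 : (0:ℝ) ≤ ρ := by linarith
    have hpr : (0:ℝ) ≤ (ρ - 0.1) * (1 - ρ) := mul_nonneg (by linarith) (by linarith)
    have hpi2lo : (9.8695994 : ℝ) ≤ π ^ 2 := by nlinarith [Real.pi_gt_d6]
    have hpi2hi : π ^ 2 ≤ 9.8696066 := by nlinarith [Real.pi_gt_d6, Real.pi_lt_d6]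
    have e1 : (4/3 : ℝ) * 9.8695994 * ρ ≤ (4/3) * π^2 * ρ := by nlinarith
    have e2 : (π^2/9) * ρ^2 ≤ (9.8696066/9) * ρ^2 := by nlinarith [sq_nonneg ρ]
    have hl : (0.8 + 2.6 * ρ : ℝ) ≤ Real.sqrt (4 * π * (ρ * π / 3) - (ρ * π / 3) ^ 2) := by
      apply Real.le_sqrt_of_sq_le
      nlinarith [e1, e2, hpr]
    rw [Ifun, circPerim0, my_B'_eq, my_p5_eq, my_p5'_eq]
    have hb : (28.49152 : ℝ) ≤ π * (3 * Real.sqrt 3 + Real.sqrt 15) := by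
      nlinarith [my_s3pi_lb, my_s15pi_lb]
    have hint1 : 0 ≤ ρ * (π * (3 * Real.sqrt 3 + Real.sqrt 15) - 28.49152) :=
      mul_nonneg hr0 (by linarith)
    have hint2 : 0 ≤ ρ * (0.73 - Real.arccos (Real.sqrt 5 / 3)) :=
      mul_nonneg hr0 (by linarith [my_A_ub])
    nlinarith [hl, hint1, hint2, my_pis_ub, my_s3pi_lb, my_s15pi_lb, my_A_lb, my_A_ub]
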